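/- Let (R, I) be a henselian pair and let R → S be a ring homomorphism mapping I isomorphically (as an ideal, i.e. bijectively) onto an ideal J ⊆ S. Then (S, J) is a henselian pair. -/
import Mathlib

open Polynomial

/-- In a henselian pair `(R, I)`, every equation `u + ∑ xⱼ (u-1)ʲ = 0` with
coefficients `xⱼ ∈ I` has a solution `u ∈ I`. This is proven by the substitution
`u = a / (1 + a)`, which turns the equation into a monic (after scaling by a unit)
polynomial equation with a simple root at `0` modulo `I`. -/
lemma gabber_special_root {R : Type*} [CommRing R] (I : Ideal R) [HenselianRing R I]
    (n : ℕ) (hn : 0 < n) (x : ℕ → R) (hx : ∀ j, x j ∈ I) :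
    ∃ u ∈ I, u + ∑ j ∈ Finset.range n, x j * (u - 1) ^ j = 0 := by
  classical
  rcases subsingleton_or_nontrivial R with hR | hR
  · exact ⟨0, I.zero_mem, Subsingleton.elim _ _⟩
  have hjac : I ≤ Ideal.jacobson ⊥ := HenselianRing.jac
  have hItop : I ≠ ⊤ := by
    intro h
    have h1 : (1 : R) ∈ I := h ▸ Submodule.mem_top
    have h2 := Ideal.mem_jacobson_bot.mp (hjac h1) (-1)
    simp at h2
  haveI : Nontrivial (R ⧸ I) := Ideal.Quotient.nontrivial_iff.mpr hItop
  haveI := isLocalHom_of_le_jacobson_bot I hjac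
  obtain ⟨m, rfl⟩ : ∃ m, n = m + 1 := ⟨n - 1, by omega⟩
  set H : R[X] := X * (X + C 1) ^ m +
      ∑ j ∈ Finset.range (m + 1), C ((-1) ^ j * x j) * (X + C 1) ^ (m + 1 - j) with hH
  -- the reduction of `H` modulo `I`
  have hmap : H.map (Ideal.Quotient.mk I) = X * (X + C 1) ^ m := by
    rw [hH]
    simp only [Polynomial.map_add, Polynomial.map_mul, Polynomial.map_pow, Polynomial.map_sum,
      Polynomial.map_X, Polynomial.map_C, Polynomial.map_one, map_one]
    have hz : ∀ j ∈ Finset.range (m + 1),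
        (C (Ideal.Quotient.mk I ((-1) ^ j * x j)) : (R ⧸ I)[X]) * (X + 1) ^ (m + 1 - j) = 0 := by
      intro j _
      rw [Ideal.Quotient.eq_zero_iff_mem.mpr (I.mul_mem_left _ (hx j)), map_zero, zero_mul]
    rw [Finset.sum_eq_zero hz, add_zero]
  -- facts about the model polynomial over the quotient
  have hmon : (X * (X + C (1 : R ⧸ I)) ^ m).Monic := monic_X.mul ((monic_X_add_C 1).pow m)
  have hmodeldeg : (X * (X + C (1 : R ⧸ I)) ^ m).natDegree = m + 1 := by
    rw [monic_X.natDegree_mul ((monic_X_add_C 1).pow m), natDegree_X,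
      (monic_X_add_C (1 : R ⧸ I)).natDegree_pow, natDegree_X_add_C, mul_one, add_comm]
  have hmodellead : (X * (X + C (1 : R ⧸ I)) ^ m).coeff (m + 1) = 1 := by
    rw [← hmodeldeg]; exact hmon.coeff_natDegree
  have hmodel0 : (X * (X + C (1 : R ⧸ I)) ^ m).eval 0 = 0 := by simp
  have hmodel1 : (X * (X + C (1 : R ⧸ I)) ^ m).coeff 1 = 1 := by
    have h01 : (1 : ℕ) = 0 + 1 := rfl
    rw [h01, coeff_X_mul, coeff_zero_eq_eval_zero]
    simp
  -- degree bound for `H`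
  have hXC : ((X + C (1 : R)) ^ m).natDegree ≤ m := by
    refine natDegree_pow_le.trans ?_
    have : (X + C (1 : R)).natDegree ≤ 1 :=
      (natDegree_add_le _ _).trans (by simp [natDegree_X_le])
    calc m * (X + C (1 : R)).natDegree ≤ m * 1 := Nat.mul_le_mul_left m this
      _ = m := mul_one m
  have hXC' : ∀ k, ((X + C (1 : R)) ^ k).natDegree ≤ k := by
    intro k
    refine natDegree_pow_le.trans ?_
    have : (X + C (1 : R)).natDegree ≤ 1 :=
      (natDegree_add_le _ _).trans (by simp [natDegree_X_le])
    calc k * (X + C (1 : R)).natDegree ≤ k * 1 := Nat.mul_le_mul_left k this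
      _ = k := mul_one k
  have hHdeg : H.natDegree ≤ m + 1 := by
    rw [hH]
    refine (natDegree_add_le _ _).trans (max_le ?_ ?_)
    · refine natDegree_mul_le.trans ?_
      have := natDegree_X_le (R := R)
      omega
    · refine natDegree_sum_le_of_forall_le _ _ fun j hj => ?_
      refine natDegree_mul_le.trans ?_
      have h1 := hXC' (m + 1 - j)
      have h2 : (C ((-1) ^ j * x j) : R[X]).natDegree = 0 := natDegree_C _
      omega
  -- the leading coefficient of `H` is a unit
  have hlead : Ideal.Quotient.mk I (H.coeff (m + 1)) = 1 := by
    rw [← coeff_map, hmap, hmodellead]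
  have hcu : IsUnit (H.coeff (m + 1)) :=
    isUnit_of_map_unit (Ideal.Quotient.mk I) _ (hlead ▸ isUnit_one)
  set cu := hcu.unit with hcud
  have hcuspec : (↑cu : R) = H.coeff (m + 1) := hcu.unit_spec
  set M : R[X] := C (↑cu⁻¹ : R) * H with hM
  have hMmap : M.map (Ideal.Quotient.mk I) =
      C (Ideal.Quotient.mk I (↑cu⁻¹ : R)) * (X * (X + C 1) ^ m) := by
    rw [hM, Polynomial.map_mul, Polynomial.map_C, hmap]
  have hMmonic : M.Monic := by
    refine monic_of_natDegree_le_of_coeff_eq_one (m + 1) ?_ ?_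
    · refine natDegree_mul_le.trans ?_
      have : (C (↑cu⁻¹ : R)).natDegree = 0 := natDegree_C _
      omega
    · rw [hM, coeff_C_mul, ← hcuspec, Units.inv_mul]
  have hM0 : M.eval 0 ∈ I := by
    rw [← Ideal.Quotient.eq_zero_iff_mem, ← coeff_zero_eq_eval_zero, ← coeff_map, hMmap,
      coeff_C_mul, coeff_zero_eq_eval_zero, hmodel0, mul_zero]
  have hM1 : IsUnit (Ideal.Quotient.mk I (M.derivative.eval 0)) := by
    have e1 : M.derivative.eval 0 = M.coeff 1 := by
      rw [← coeff_zero_eq_eval_zero, coeff_derivative]; simp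
    rw [e1, ← coeff_map, hMmap, coeff_C_mul, hmodel1, mul_one]
    exact (cu⁻¹).isUnit.map (Ideal.Quotient.mk I)
  obtain ⟨a, hroot, haI'⟩ := HenselianRing.is_henselian (I := I) M hMmonic 0 hM0 hM1
  have haI : a ∈ I := by simpa using haI'
  have hHa : H.eval a = 0 := by
    have : (↑cu⁻¹ : R) * H.eval a = 0 := by
      have := hroot
      rwa [IsRoot, hM, eval_mul, eval_C] at this
    exact ((cu⁻¹).mul_right_eq_zero).mp this
  have hva : IsUnit (1 + a) := by
    have := Ideal.mem_jacobson_bot.mp (hjac haI) 1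
    simpa [add_comm] using this
  set v := hva.unit with hvd
  have hvspec : (↑v : R) = 1 + a := hva.unit_spec
  refine ⟨(↑v⁻¹ : R) * a, I.mul_mem_left _ haI, ?_⟩
  set u : R := (↑v⁻¹ : R) * a with hud
  have hvu : (1 + a) * u = a := by
    rw [hud, ← hvspec, ← mul_assoc, Units.mul_inv, one_mul]
  have hσ : (1 + a) * (u - 1) = -1 := by
    rw [mul_sub, hvu, mul_one, ← hvspec, hvspec]; ring
  have hterm : ∀ j, j < m + 1 →
      (1 + a) ^ (m + 1) * (x j * (u - 1) ^ j) = (-1) ^ j * x j * (a + 1) ^ (m + 1 - j) := by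
    intro j hj
    have hsplit : (1 + a) ^ (m + 1) = (1 + a) ^ j * (1 + a) ^ (m + 1 - j) := by
      rw [← pow_add]; congr 1; omega
    calc (1 + a) ^ (m + 1) * (x j * (u - 1) ^ j)
        = ((1 + a) * (u - 1)) ^ j * (x j * (1 + a) ^ (m + 1 - j)) := by
          rw [hsplit, mul_pow]; ring
      _ = (-1) ^ j * x j * (a + 1) ^ (m + 1 - j) := by
          rw [hσ]; ring_nf
  have hfirst : (1 + a) ^ (m + 1) * u = a * (a + 1) ^ m := by
    rw [pow_succ, mul_assoc, hvu]; ring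
  have hevalH : H.eval a = a * (a + 1) ^ m +
      ∑ j ∈ Finset.range (m + 1), (-1) ^ j * x j * (a + 1) ^ (m + 1 - j) := by
    rw [hH]
    simp [eval_finset_sum]
  have hkey : (1 + a) ^ (m + 1) * (u + ∑ j ∈ Finset.range (m + 1), x j * (u - 1) ^ j) = 0 := by
    rw [mul_add, Finset.mul_sum, hfirst,
      Finset.sum_congr rfl (fun j hj => hterm j (Finset.mem_range.mp hj)), ← hevalH, hHa]
  exact ((hva.pow (m + 1)).mul_right_eq_zero).mp hkey

/-- If `(R, I)` is a henselian pair and `R → S` is a ring homomorphism mapping `I`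
bijectively onto an ideal `J ⊆ S`, then `(S, J)` is a henselian pair. -/
theorem henselianRing_of_ideal_iso
    {R S : Type*} [CommRing R] [CommRing S]
    (I : Ideal R) [HenselianRing R I]
    (f : R →+* S) (J : Ideal S)
    (hmaps : ∀ x ∈ I, f x ∈ J)
    (hbij : ∀ y ∈ J, ∃! x : R, x ∈ I ∧ f x = y) :
    HenselianRing S J := by
  classical
  have hJac : J ≤ Ideal.jacobson ⊥ := by
    intro y hy
    rw [Ideal.mem_jacobson_bot]
    intro s
    obtain ⟨w, hw⟩ := (hbij (y * s) (J.mul_mem_right s hy)).exists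
    have h1 : IsUnit (w * 1 + 1) := Ideal.mem_jacobson_bot.mp (HenselianRing.jac hw.1) 1
    have h2 := h1.map f
    rwa [map_add, map_mul, map_one, hw.2, mul_one] at h2
  refine ⟨hJac, ?_⟩
  intro p hp a₀ h₁ h₂
  rcases subsingleton_or_nontrivial S with hS | hS
  · exact ⟨a₀, Subsingleton.elim _ _, by rw [sub_self]; exact J.zero_mem⟩
  haveI := isLocalHom_of_le_jacobson_bot J hJac
  set q : S[X] := p.comp (X + C a₀) with hq
  have hc0 : q.coeff 0 ∈ J := by
    have e : q.coeff 0 = p.eval a₀ := by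
      rw [coeff_zero_eq_eval_zero, hq, eval_comp]; simp
    exact e ▸ h₁
  have hc1 : q.coeff 1 = p.derivative.eval a₀ := by
    have e1 : q.coeff 1 = q.derivative.eval 0 := by
      rw [← coeff_zero_eq_eval_zero, coeff_derivative]; simp
    rw [e1, hq, derivative_comp]
    simp
  have hc1u : IsUnit (q.coeff 1) := by
    rw [hc1]; exact isUnit_of_map_unit (Ideal.Quotient.mk J) _ h₂
  set cu := hc1u.unit with hcud
  have hcuspec : (↑cu : S) = q.coeff 1 := hc1u.unit_spec
  have hd1 : 1 ≤ q.natDegree := le_natDegree_of_ne_zero hc1u.ne_zero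
  -- the coefficients `b j ∈ J` of the reduced equation
  set b : ℕ → S := fun j =>
    if j < 2 then 0 else (↑cu⁻¹ : S) ^ j * q.coeff j * q.coeff 0 ^ (j - 1) with hb
  have hbJ : ∀ j, b j ∈ J := by
    intro j
    rw [hb]
    dsimp only
    split
    · exact J.zero_mem
    · exact J.mul_mem_left _ (Ideal.pow_mem_of_mem J hc0 _ (by omega))
  -- transfer the equation to `R` and solve it there
  set x : ℕ → R := fun j => ((hbij (b j) (hbJ j)).exists).choose with hxd
  have hxspec : ∀ j, x j ∈ I ∧ f (x j) = b j :=
    fun j => ((hbij (b j) (hbJ j)).exists).choose_spec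
  obtain ⟨w, hwI, hw⟩ :=
    gabber_special_root I (q.natDegree + 1) (by omega) x (fun j => (hxspec j).1)
  set u : S := f w with hud
  have huJ : u ∈ J := hmaps w hwI
  have hweq : u + ∑ j ∈ Finset.range (q.natDegree + 1), b j * (u - 1) ^ j = 0 := by
    have h0 := congrArg f hw
    rw [map_add, map_sum, map_zero] at h0
    rw [← h0, hud]
    congr 1
    refine Finset.sum_congr rfl fun j _ => ?_
    rw [map_mul, map_pow, map_sub, map_one, (hxspec j).2]
  -- the root of `q`
  set ε : S := ↑cu * ((↑cu⁻¹ : S) * ↑cu⁻¹ * q.coeff 0) * (u - 1) with hεd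
  have hεJ : ε ∈ J := J.mul_mem_right _ (J.mul_mem_left _ (J.mul_mem_left _ hc0))
  have hcc : (↑cu : S) * ↑cu⁻¹ = 1 := cu.mul_inv
  have hsplit : ∀ j ∈ Finset.range (q.natDegree + 1),
      q.coeff j * ε ^ j = q.coeff 0 * (b j * (u - 1) ^ j) +
        (if j = 0 then q.coeff 0 else if j = 1 then q.coeff 0 * (u - 1) else 0) := by
    intro j _
    by_cases hj0 : j = 0
    · subst hj0
      simp [hb]
    by_cases hj1 : j = 1
    · subst hj1
      have hb1 : b 1 = 0 := by simp [hb]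
      rw [hb1]
      norm_num
      rw [hεd, ← hcuspec]
      linear_combination ((↑cu : S) * ↑cu⁻¹ + 1) * q.coeff 0 * (u - 1) * hcc
    · obtain ⟨i, rfl⟩ : ∃ i, j = i + 2 := ⟨j - 2, by omega⟩
      have hbj : b (i + 2) = (↑cu⁻¹ : S) ^ (i + 2) * q.coeff (i + 2) * q.coeff 0 ^ (i + 1) := by
        rw [hb]
        simp only
        rw [if_neg (by omega), show i + 2 - 1 = i + 1 from rfl]
      have hK : ((↑cu : S) * ↑cu⁻¹) ^ (i + 2) = 1 := by rw [hcc, one_pow]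
      rw [if_neg (by omega), if_neg (by omega), add_zero, hbj]
      calc q.coeff (i + 2) * ε ^ (i + 2)
          = ((↑cu : S) * ↑cu⁻¹) ^ (i + 2) *
              (q.coeff (i + 2) * ((↑cu⁻¹ : S) ^ (i + 2) * q.coeff 0 ^ (i + 2) * (u - 1) ^ (i + 2))) := by
            rw [hεd]; simp only [mul_pow]; ring
        _ = q.coeff 0 * ((↑cu⁻¹ : S) ^ (i + 2) * q.coeff (i + 2) * q.coeff 0 ^ (i + 1) * (u - 1) ^ (i + 2)) := by
            rw [hK, one_mul]; ring
  have hifsum : ∑ j ∈ Finset.range (q.natDegree + 1),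
      (if j = 0 then q.coeff 0 else if j = 1 then q.coeff 0 * (u - 1) else 0) =
      q.coeff 0 + q.coeff 0 * (u - 1) := by
    have hsplitif : ∀ j : ℕ, (if j = 0 then q.coeff 0 else if j = 1 then q.coeff 0 * (u - 1) else 0) =
        (if j = 0 then q.coeff 0 else 0) + (if j = 1 then q.coeff 0 * (u - 1) else 0) := by
      intro j
      by_cases h0 : j = 0
      · subst h0; simp
      by_cases h1 : j = 1
      · subst h1; simp
      · simp [h0, h1]
    rw [Finset.sum_congr rfl fun j _ => hsplitif j, Finset.sum_add_distrib,
      Finset.sum_ite_eq' (Finset.range (q.natDegree + 1)) 0 (fun _ => q.coeff 0),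
      Finset.sum_ite_eq' (Finset.range (q.natDegree + 1)) 1 (fun _ => q.coeff 0 * (u - 1)),
      if_pos (Finset.mem_range.mpr (by omega)), if_pos (Finset.mem_range.mpr (by omega))]
  have hkey : q.eval ε = 0 := by
    rw [eval_eq_sum_range, Finset.sum_congr rfl hsplit, Finset.sum_add_distrib, hifsum]
    have : ∑ j ∈ Finset.range (q.natDegree + 1), q.coeff 0 * (b j * (u - 1) ^ j) +
        (q.coeff 0 + q.coeff 0 * (u - 1)) =
        q.coeff 0 * (u + ∑ j ∈ Finset.range (q.natDegree + 1), b j * (u - 1) ^ j) := by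
      rw [mul_add, Finset.mul_sum]; ring
    rw [this, hweq, mul_zero]
  refine ⟨a₀ + ε, ?_, by simpa using hεJ⟩
  have he : q.eval ε = p.eval (ε + a₀) := by
    rw [hq, eval_comp]; simp
  rw [IsRoot, show a₀ + ε = ε + a₀ from add_comm _ _, ← he, hkey]
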